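/- Let η_k = 3^{-(k-1)} for k ≥ 1. There exists β ∈ ∏_{k=1}^∞ ℝ/ℤ such that T_η(β) ∩ Ξ⁰ = ∅; that is, for every α ∈ T_η the sequence (β_k + α_k)_{k≥1} does not converge to 0 in ℝ/ℤ. -/

import Mathlib

/-- For `η_k = 3^{-(k-1)}` (indexed by `k : ℕ`, `η = 3^{-k}`), there exists
`β ∈ ∏_k ℝ/ℤ` such that `T_η(β) ∩ Ξ⁰ = ∅`: for every `α` in the orbit closure `T_η`,
the sequence `(β_k + α_k)` does not converge to `0` in `ℝ/ℤ`. -/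
theorem stmt_1 :
    ∃ β : ℕ → AddCircle (1 : ℝ),
      ∀ α ∈ closure (Set.range (fun x : ℝ =>
          (fun k : ℕ => (((3 : ℝ) ^ (-(k : ℤ)) * x : ℝ) : AddCircle (1 : ℝ))))),
        ¬ Filter.Tendsto (fun k : ℕ => β k + α k) Filter.atTop
            (nhds (0 : AddCircle (1 : ℝ))) := by
  refine ⟨fun _ => ((1/4 : ℝ) : AddCircle (1 : ℝ)), ?_⟩
  intro α hα h
  -- The relation α k = 3 • α (k+1) holds on the closure.
  have hrel : ∀ k : ℕ, α k = (3 : ℕ) • α (k + 1) := by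
    intro k
    have hcl : IsClosed {a : ℕ → AddCircle (1 : ℝ) | a k = (3 : ℕ) • a (k + 1)} :=
      isClosed_eq (continuous_apply k) ((continuous_apply (k + 1)).nsmul 3)
    have hsub : Set.range (fun x : ℝ =>
        (fun k : ℕ => (((3 : ℝ) ^ (-(k : ℤ)) * x : ℝ) : AddCircle (1 : ℝ)))) ⊆
        {a : ℕ → AddCircle (1 : ℝ) | a k = (3 : ℕ) • a (k + 1)} := by
      rintro a ⟨x, rfl⟩
      have heq : ((3 : ℝ) ^ (-(k : ℤ)) * x : ℝ) =
          (3 : ℕ) • ((3 : ℝ) ^ (-((k : ℕ) + 1 : ℕ) : ℤ) * x) := by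
        rw [nsmul_eq_mul, ← mul_assoc]
        congr 1
        push_cast
        rw [← zpow_one_add₀ (by norm_num : (3:ℝ) ≠ 0)]
        congr 1
        ring
      simp only [Set.mem_setOf_eq, heq]
      exact AddCircle.coe_nsmul (p := (1 : ℝ))
    exact closure_minimal hsub hcl hα
  -- Shift: 1/4 + α (k+1) → 0
  have h1 : Filter.Tendsto (fun k : ℕ => ((1/4 : ℝ) : AddCircle (1 : ℝ)) + α (k + 1))
      Filter.atTop (nhds 0) := h.comp (Filter.tendsto_add_atTop_nat 1)
  -- Multiply by 3: 3/4 + α k → 0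
  have h3 : Filter.Tendsto (fun k : ℕ => ((3/4 : ℝ) : AddCircle (1 : ℝ)) + α k)
      Filter.atTop (nhds 0) := by
    have := (h1.const_smul (3 : ℕ))
    simp only [smul_zero] at this
    refine this.congr (fun k => ?_)
    rw [smul_add, ← hrel k, ← AddCircle.coe_nsmul]
    norm_num
  -- Subtract: constant 1/2 → 0
  have hsubt : Filter.Tendsto
      (fun _ : ℕ => ((1/2 : ℝ) : AddCircle (1 : ℝ))) Filter.atTop (nhds 0) := by
    have := h3.sub h
    simp only [sub_zero] at this
    refine this.congr (fun k => ?_)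
    have : ((3/4 : ℝ) : AddCircle (1 : ℝ)) - ((1/4 : ℝ) : AddCircle (1 : ℝ)) =
        ((1/2 : ℝ) : AddCircle (1 : ℝ)) := by
      rw [← AddCircle.coe_sub]; norm_num
    rw [add_comm ((3/4 : ℝ) : AddCircle (1 : ℝ)), add_comm ((1/4 : ℝ) : AddCircle (1 : ℝ)),
      add_sub_add_left_eq_sub, this]
  have heq : ((1/2 : ℝ) : AddCircle (1 : ℝ)) = 0 :=
    tendsto_nhds_unique (tendsto_const_nhds : Filter.Tendsto _ Filter.atTop _) hsubt
  rw [AddCircle.coe_eq_zero_iff] at heq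
  obtain ⟨n, hn⟩ := heq
  have : (n : ℝ) = 1/2 := by simpa using hn
  have : (2 * n : ℤ) = 1 := by exact_mod_cast (by linarith : (2 * n : ℝ) = 1)
  omega
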